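/- arXiv:2502.07765 — 2 statements merged into one kernel-verified Lean document; each statement's English description precedes it below -/
import Mathlib

section
/- In the real/complex cone setup, every ℓ ∈ 𝒞'_ℂ satisfies ‖ℓ‖' ≤ √2 |ℓ(𝕖)|, where ‖ℓ‖' is the operator norm of ℓ on B_ℂ. -/
open Complex Set ENNReal

namespace ConeSetup

variable {B : Type*} [NormedAddCommGroup B] [NormedSpace ℝ B]

/-- Complex scalar multiplication on the complexification `B × B`:
`(a+ib)(x,y) = (ax − by, ay + bx)`. -/
def cSmul (z : ℂ) (p : B × B) : B × B :=
  (z.re • p.1 - z.im • p.2, z.re • p.2 + z.im • p.1)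

/-- The "real" norm `‖(x,y)‖_r = √(‖x‖² + ‖y‖²)` on the complexification. -/
noncomputable def rNorm (p : B × B) : ℝ :=
  Real.sqrt (‖p.1‖ ^ 2 + ‖p.2‖ ^ 2)

/-- The complexification norm `‖(x,y)‖ = sup_{θ∈[0,2π]} ‖e^{iθ}(x,y)‖_r`. -/
noncomputable def cNorm (p : B × B) : ℝ :=
  sSup ((fun θ : ℝ => rNorm (cSmul (Complex.exp (θ * Complex.I)) p)) ''
    Set.Icc 0 (2 * Real.pi))

/-- The real cone `𝒞_ℝ = {h ≠ 0 : ℓ(h) ≥ 0 for all ℓ ∈ S}`. -/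
def realCone (S : Set (B →L[ℝ] ℝ)) : Set B :=
  {h | h ≠ 0 ∧ ∀ ℓ ∈ S, 0 ≤ ℓ h}

/-- The complex cone `𝒞_ℂ = ℂ_* ⋅ (𝒞_ℝ + i 𝒞_ℝ)`. -/
def complexCone (S : Set (B →L[ℝ] ℝ)) : Set (B × B) :=
  {p | ∃ z : ℂ, z ≠ 0 ∧ ∃ x ∈ realCone S, ∃ y ∈ realCone S, p = cSmul z (x, y)}

/-- A map `B × B → ℂ` is a (continuous) complex-linear functional for the complex
structure `cSmul`. -/
def IsCLinearFunctional (ℓ : B × B → ℂ) : Prop :=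
  (∀ p q : B × B, ℓ (p + q) = ℓ p + ℓ q) ∧
  (∀ (z : ℂ) (p : B × B), ℓ (cSmul z p) = z * ℓ p) ∧
  Continuous ℓ

/-- The dual real cone `𝒞'_ℝ = {ℓ ∈ B'_ℝ : ℓ(h) ≥ 0 for all h ∈ 𝒞_ℝ}`. -/
def dualRealCone (S : Set (B →L[ℝ] ℝ)) : Set (B →L[ℝ] ℝ) :=
  {ℓ | ∀ h ∈ realCone S, 0 ≤ ℓ h}

/-- The dual complex cone `𝒞'_ℂ = {ℓ ∈ B'_ℂ : ℓ(h) ≠ 0 for all h ∈ 𝒞_ℂ}`. -/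
def dualComplexCone (S : Set (B →L[ℝ] ℝ)) : Set (B × B → ℂ) :=
  {ℓ | IsCLinearFunctional ℓ ∧ ∀ h ∈ complexCone S, ℓ h ≠ 0}

/-- The action of a real functional on the complexification: `ℓ(x+iy) = ℓ(x) + iℓ(y)`. -/
noncomputable def cext (ℓ : B →L[ℝ] ℝ) (p : B × B) : ℂ :=
  (ℓ p.1 : ℂ) + (ℓ p.2 : ℂ) * Complex.I

/-- `𝒞̊'_ℝ = {ℓ ∈ 𝒞'_ℝ : ℓ(x) > 0 for all x ∈ 𝒞_ℝ}`. -/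
def interiorDualRealCone (S : Set (B →L[ℝ] ℝ)) : Set (B →L[ℝ] ℝ) :=
  {ℓ | ℓ ∈ dualRealCone S ∧ ∀ x ∈ realCone S, 0 < ℓ x}

/-- `Ĉ'_ℂ = {±ℓ ± ip : ℓ, p ∈ 𝒞̊'_ℝ}`. -/
def hatDualComplexCone (S : Set (B →L[ℝ] ℝ)) : Set (B × B → ℂ) :=
  {q | ∃ ℓ ∈ interiorDualRealCone S, ∃ p ∈ interiorDualRealCone S,
    ∃ ε₁ ∈ ({1, -1} : Set ℝ), ∃ ε₂ ∈ ({1, -1} : Set ℝ),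
      q = fun v => (ε₁ : ℂ) * cext ℓ v + (ε₂ : ℂ) * Complex.I * cext p v}

/-- `E_𝒞(h,g) = {ℓ(h)/ℓ(g) : ℓ ∈ 𝒞'_ℂ}`. -/
def gaugeSet (S : Set (B →L[ℝ] ℝ)) (h g : B × B) : Set ℂ :=
  {z | ∃ ℓ ∈ dualComplexCone S, z = ℓ h / ℓ g}

/-- The projective gauge
`δ_𝒞(h,g) = ln( sup_{z∈E_𝒞(h,g)} |z| / inf_{z∈E_𝒞(h,g)} |z| ) = sup_{z,w∈E_𝒞(h,g)} ln|z/w|`,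
valued in `[0,∞]`. -/
noncomputable def deltaGauge (S : Set (B →L[ℝ] ℝ)) (h g : B × B) : ℝ≥0∞ :=
  ⨆ z ∈ gaugeSet S h g, ⨆ w ∈ gaugeSet S h g, ENNReal.ofReal (Real.log (‖z‖ / ‖w‖))

/-- The real/complex cone setup: a separating family `S` of functionals, an order unit `𝕖`
whose cone norm is the norm of `B`, and a functional `𝕞` in the weak-* closed convex hull
of `ℝ₊ ⋅ S` dominating the norm on the cone. -/
structure Setup (B : Type*) [NormedAddCommGroup B] [NormedSpace ℝ B] where
  S : Set (B →L[ℝ] ℝ)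
  e : B
  mm : B →L[ℝ] ℝ
  κ : ℝ
  separating : ∀ x : B, (∀ ℓ ∈ S, ℓ x = 0) → x = 0
  e_mem : e ∈ realCone S
  arch : ∀ h : B, ∃ l : ℝ, 0 ≤ l ∧ ∀ ℓ ∈ S, 0 ≤ ℓ (l • e - h)
  norm_eq : ∀ h : B,
    ‖h‖ = sInf {l : ℝ | 0 ≤ l ∧ ∀ ℓ ∈ S, 0 ≤ ℓ (l • e - h) ∧ 0 ≤ ℓ (l • e + h)}
  κ_pos : 0 < κ
  κ_lt_one : κ < 1
  mm_e : mm e = 1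
  mm_lower : ∀ h ∈ realCone S, κ * ‖h‖ ≤ mm h
  mm_star : (⇑mm : B → ℝ) ∈ closure ((fun ℓ : B →L[ℝ] ℝ => (⇑ℓ : B → ℝ)) ''
    convexHull ℝ {q : B →L[ℝ] ℝ | ∃ c : ℝ, 0 ≤ c ∧ ∃ ℓ ∈ S, q = c • ℓ})

lemma cSmul_one' (p : B × B) : cSmul 1 p = p := by
  simp [cSmul]

lemma cSmul_mul' (z w : ℂ) (p : B × B) :
    cSmul (z * w) p = cSmul z (cSmul w p) := by
  refine Prod.ext ?_ ?_ <;>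
  · simp only [cSmul, Complex.mul_re, Complex.mul_im]
    module

lemma fst_le_rNorm (p : B × B) : ‖p.1‖ ≤ rNorm p := by
  have h := Real.sqrt_le_sqrt (le_add_of_nonneg_right (sq_nonneg ‖p.2‖) :
    ‖p.1‖ ^ 2 ≤ ‖p.1‖ ^ 2 + ‖p.2‖ ^ 2)
  rwa [Real.sqrt_sq (norm_nonneg _)] at h

lemma snd_le_rNorm (p : B × B) : ‖p.2‖ ≤ rNorm p := by
  have h := Real.sqrt_le_sqrt (le_add_of_nonneg_left (sq_nonneg ‖p.1‖) :
    ‖p.2‖ ^ 2 ≤ ‖p.1‖ ^ 2 + ‖p.2‖ ^ 2)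
  rwa [Real.sqrt_sq (norm_nonneg _)] at h

lemma rNorm_le_sum (p : B × B) : rNorm p ≤ ‖p.1‖ + ‖p.2‖ := by
  have h : ‖p.1‖ ^ 2 + ‖p.2‖ ^ 2 ≤ (‖p.1‖ + ‖p.2‖) ^ 2 := by
    nlinarith [norm_nonneg p.1, norm_nonneg p.2]
  have := Real.sqrt_le_sqrt h
  rwa [Real.sqrt_sq (by positivity)] at this

lemma rNorm_cSmul_le_sum (z : ℂ) (hz : ‖z‖ ≤ 1) (p : B × B) :
    rNorm (cSmul z p) ≤ 2 * (‖p.1‖ + ‖p.2‖) := by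
  have hre : |z.re| ≤ 1 := le_trans (Complex.abs_re_le_norm z) hz
  have him : |z.im| ≤ 1 := le_trans (Complex.abs_im_le_norm z) hz
  have h1 : ‖(cSmul z p).1‖ ≤ ‖p.1‖ + ‖p.2‖ := by
    calc ‖z.re • p.1 - z.im • p.2‖ ≤ ‖z.re • p.1‖ + ‖z.im • p.2‖ := norm_sub_le _ _
    _ = |z.re| * ‖p.1‖ + |z.im| * ‖p.2‖ := by rw [norm_smul, norm_smul]; rfl
    _ ≤ ‖p.1‖ + ‖p.2‖ := by nlinarith [norm_nonneg p.1, norm_nonneg p.2, abs_nonneg z.re, abs_nonneg z.im]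
  have h2 : ‖(cSmul z p).2‖ ≤ ‖p.1‖ + ‖p.2‖ := by
    calc ‖z.re • p.2 + z.im • p.1‖ ≤ ‖z.re • p.2‖ + ‖z.im • p.1‖ := norm_add_le _ _
    _ = |z.re| * ‖p.2‖ + |z.im| * ‖p.1‖ := by rw [norm_smul, norm_smul]; rfl
    _ ≤ ‖p.1‖ + ‖p.2‖ := by nlinarith [norm_nonneg p.1, norm_nonneg p.2, abs_nonneg z.re, abs_nonneg z.im]
  calc rNorm (cSmul z p) ≤ ‖(cSmul z p).1‖ + ‖(cSmul z p).2‖ := rNorm_le_sum _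
  _ ≤ (‖p.1‖ + ‖p.2‖) + (‖p.1‖ + ‖p.2‖) := add_le_add h1 h2
  _ = 2 * (‖p.1‖ + ‖p.2‖) := by ring

lemma cNorm_bddAbove (p : B × B) :
    BddAbove ((fun θ : ℝ => rNorm (cSmul (Complex.exp (θ * Complex.I)) p)) ''
      Set.Icc 0 (2 * Real.pi)) := by
  refine ⟨2 * (‖p.1‖ + ‖p.2‖), ?_⟩
  rintro r ⟨θ, -, rfl⟩
  exact rNorm_cSmul_le_sum _ (le_of_eq (Complex.norm_exp_ofReal_mul_I θ)) p

lemma rNorm_exp_le_cNorm (θ : ℝ) (p : B × B) :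
    rNorm (cSmul (Complex.exp (θ * Complex.I)) p) ≤ cNorm p := by
  have h2π : (0 : ℝ) < 2 * Real.pi := by positivity
  set k : ℤ := ⌊θ / (2 * Real.pi)⌋
  set θ' : ℝ := θ - 2 * Real.pi * k
  have hθ'1 : 0 ≤ θ' := by
    have := Int.floor_le (θ / (2 * Real.pi))
    have : (k : ℝ) * (2 * Real.pi) ≤ θ := by
      rw [← div_mul_cancel₀ θ (ne_of_gt h2π)]
      exact mul_le_mul_of_nonneg_right this (le_of_lt h2π)
    simp only [θ']; linarith
  have hθ'2 : θ' ≤ 2 * Real.pi := by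
    have := Int.lt_floor_add_one (θ / (2 * Real.pi))
    have : θ < ((k : ℝ) + 1) * (2 * Real.pi) := by
      rw [← div_mul_cancel₀ θ (ne_of_gt h2π)]
      exact mul_lt_mul_of_pos_right this h2π
    simp only [θ']; nlinarith
  have hexp : Complex.exp ((θ' : ℝ) * Complex.I) = Complex.exp ((θ : ℝ) * Complex.I) := by
    have : ((θ' : ℝ) : ℂ) = (θ : ℂ) - k * (2 * Real.pi) := by
      push_cast [θ']; ring
    rw [this, sub_mul, Complex.exp_sub]
    have : ((k : ℂ) * (2 * (Real.pi : ℂ))) * Complex.I = (k : ℂ) * (2 * (Real.pi : ℂ) * Complex.I) := by ring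
    rw [this, Complex.exp_int_mul_two_pi_mul_I]
    simp
  rw [← hexp]
  exact le_csSup (cNorm_bddAbove p) ⟨θ', ⟨hθ'1, hθ'2⟩, rfl⟩

lemma rNorm_real_cSmul (r : ℝ) (hr : 0 ≤ r) (p : B × B) :
    rNorm (cSmul (r : ℂ) p) = r * rNorm p := by
  have h : cSmul (r : ℂ) p = (r • p.1, r • p.2) := by
    simp [cSmul]
  rw [h, rNorm, rNorm]
  simp only [norm_smul, Real.norm_eq_abs, _root_.abs_of_nonneg hr]
  rw [show (r * ‖p.1‖) ^ 2 + (r * ‖p.2‖) ^ 2 = r ^ 2 * (‖p.1‖ ^ 2 + ‖p.2‖ ^ 2) by ring,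
    Real.sqrt_mul (sq_nonneg r), Real.sqrt_sq hr]

lemma rNorm_cSmul_le (z : ℂ) (p : B × B) :
    rNorm (cSmul z p) ≤ ‖z‖ * cNorm p := by
  rcases eq_or_ne z 0 with rfl | hz
  · simp [cSmul, rNorm]
  · have hfac : z = (‖z‖ : ℂ) * Complex.exp ((z.arg : ℝ) * Complex.I) :=
      (Complex.norm_mul_exp_arg_mul_I z).symm
    calc rNorm (cSmul z p)
        = rNorm (cSmul ((‖z‖ : ℂ) * Complex.exp ((z.arg : ℝ) * Complex.I)) p) := by
          rw [← hfac]
      _ = rNorm (cSmul (‖z‖ : ℂ) (cSmul (Complex.exp ((z.arg : ℝ) * Complex.I)) p)) := by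
          rw [cSmul_mul']
      _ = ‖z‖ * rNorm (cSmul (Complex.exp ((z.arg : ℝ) * Complex.I)) p) :=
          rNorm_real_cSmul _ (norm_nonneg z) _
      _ ≤ ‖z‖ * cNorm p :=
          mul_le_mul_of_nonneg_left (rNorm_exp_le_cNorm _ _) (norm_nonneg z)

/-- If `‖w‖ < 1` then `e + w` and `e - w` lie in the real cone. -/
lemma e_add_mem (st : Setup B) {w : B} (hw : ‖w‖ < 1) :
    st.e + w ∈ realCone st.S ∧ st.e - w ∈ realCone st.S := by
  obtain ⟨l₁, hl₁0, hl₁⟩ := st.arch w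
  obtain ⟨l₂, hl₂0, hl₂⟩ := st.arch (-w)
  have he_nonneg : ∀ ℓ ∈ st.S, 0 ≤ ℓ st.e := st.e_mem.2
  have hTne : Set.Nonempty {l : ℝ | 0 ≤ l ∧ ∀ ℓ ∈ st.S,
      0 ≤ ℓ (l • st.e - w) ∧ 0 ≤ ℓ (l • st.e + w)} := by
    refine ⟨l₁ + l₂, by linarith, fun ℓ hℓ => ⟨?_, ?_⟩⟩
    · have h1 := hl₁ ℓ hℓ
      have h2 := he_nonneg ℓ hℓ
      have : ℓ ((l₁ + l₂) • st.e - w) = ℓ (l₁ • st.e - w) + l₂ * ℓ st.e := by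
        rw [show (l₁ + l₂) • st.e - w = (l₁ • st.e - w) + l₂ • st.e by rw [add_smul]; abel,
          map_add, map_smul, smul_eq_mul]
      rw [this]; nlinarith
    · have h1 := hl₂ ℓ hℓ
      have h2 := he_nonneg ℓ hℓ
      have : ℓ ((l₁ + l₂) • st.e + w) = ℓ (l₂ • st.e - (-w)) + l₁ * ℓ st.e := by
        rw [show (l₁ + l₂) • st.e + w = (l₂ • st.e - (-w)) + l₁ • st.e by rw [add_smul]; abel,
          map_add, map_smul, smul_eq_mul]
      rw [this]; nlinarith
  have hinf : sInf {l : ℝ | 0 ≤ l ∧ ∀ ℓ ∈ st.S,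
      0 ≤ ℓ (l • st.e - w) ∧ 0 ≤ ℓ (l • st.e + w)} < 1 := by
    rw [← st.norm_eq w]; exact hw
  obtain ⟨l, hlT, hl1⟩ := exists_lt_of_csInf_lt hTne hinf
  have hplus : ∀ ℓ ∈ st.S, 0 ≤ ℓ (st.e + w) := by
    intro ℓ hℓ
    have h1 := (hlT.2 ℓ hℓ).2
    have h2 := he_nonneg ℓ hℓ
    have heq : ℓ (st.e + w) = ℓ (l • st.e + w) + (1 - l) * ℓ st.e := by
      rw [show st.e + w = (l • st.e + w) + (1 - l) • st.e by rw [sub_smul, one_smul]; abel,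
        map_add, map_smul, smul_eq_mul]
    rw [heq]; nlinarith
  have hminus : ∀ ℓ ∈ st.S, 0 ≤ ℓ (st.e - w) := by
    intro ℓ hℓ
    have h1 := (hlT.2 ℓ hℓ).1
    have h2 := he_nonneg ℓ hℓ
    have heq : ℓ (st.e - w) = ℓ (l • st.e - w) + (1 - l) * ℓ st.e := by
      rw [show st.e - w = (l • st.e - w) + (1 - l) • st.e by rw [sub_smul, one_smul]; abel,
        map_add, map_smul, smul_eq_mul]
    rw [heq]; nlinarith
  have hezero : st.e ≠ 0 := st.e_mem.1
  constructor
  · refine ⟨?_, hplus⟩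
    intro h0
    have hw' : w = -st.e := by
      have := eq_neg_of_add_eq_zero_right h0
      rw [this]
    have hzero : ∀ ℓ ∈ st.S, ℓ st.e = 0 := by
      intro ℓ hℓ
      have h1 := (hlT.2 ℓ hℓ).2
      have h2 := he_nonneg ℓ hℓ
      have heq : ℓ (l • st.e + w) = (l - 1) * ℓ st.e := by
        rw [hw', show l • st.e + -st.e = (l - 1) • st.e by rw [sub_smul, one_smul]; abel,
          map_smul, smul_eq_mul]
      rw [heq] at h1
      nlinarith
    exact hezero (st.separating _ hzero)
  · refine ⟨?_, hminus⟩
    intro h0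
    have hw' : w = st.e := by
      have := sub_eq_zero.mp h0
      exact this.symm
    have hzero : ∀ ℓ ∈ st.S, ℓ st.e = 0 := by
      intro ℓ hℓ
      have h1 := (hlT.2 ℓ hℓ).1
      have h2 := he_nonneg ℓ hℓ
      have heq : ℓ (l • st.e - w) = (l - 1) * ℓ st.e := by
        rw [hw', show l • st.e - st.e = (l - 1) • st.e by rw [sub_smul, one_smul],
          map_smul, smul_eq_mul]
      rw [heq] at h1
      nlinarith
    exact hezero (st.separating _ hzero)

/-- **Lemma 5.7.** Every `ℓ ∈ 𝒞'_ℂ` satisfies `‖ℓ‖' ≤ √2 |ℓ(𝕖)|`, where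
`‖ℓ‖' = sup_{‖h‖ ≤ 1} |ℓ(h)|` is the operator norm on the complexification. -/
theorem dual_functional_norm_bound {B : Type*} [NormedAddCommGroup B] [NormedSpace ℝ B]
    [CompleteSpace B] (st : Setup B) :
    ∀ ℓ ∈ dualComplexCone st.S,
      sSup {r : ℝ | ∃ p : B × B, cNorm p ≤ 1 ∧ r = ‖ℓ p‖} ≤
        Real.sqrt 2 * ‖ℓ (st.e, 0)‖ := by
  intro ℓ hℓ
  obtain ⟨⟨hadd, hsmul, -⟩, hne⟩ := hℓ
  -- (e, e) is in the complex cone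
  have hee : ((st.e, st.e) : B × B) ∈ complexCone st.S :=
    ⟨1, one_ne_zero, st.e, st.e_mem, st.e, st.e_mem, (cSmul_one' _).symm⟩
  have hce : ℓ (st.e, st.e) ≠ 0 := hne _ hee
  -- ℓ(e,e) = (1+i) ℓ(e,0)
  have heeq : ((st.e, st.e) : B × B) = cSmul (1 + Complex.I) (st.e, 0) := by
    simp [cSmul]
  have hval : ℓ (st.e, st.e) = (1 + Complex.I) * ℓ (st.e, 0) := by
    rw [heeq, hsmul]
  have habs : ‖ℓ (st.e, st.e)‖ = Real.sqrt 2 * ‖ℓ (st.e, 0)‖ := by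
    rw [hval, norm_mul]
    congr 1
    rw [Complex.norm_def]
    congr 1
    simp [Complex.normSq_apply]
    norm_num
  -- key bound
  have key : ∀ p : B × B, cNorm p ≤ 1 → ‖ℓ p‖ ≤ ‖ℓ (st.e, st.e)‖ := by
    intro p hp
    rcases eq_or_ne (ℓ p) 0 with h0 | h0
    · rw [h0, norm_zero]; exact norm_nonneg _
    by_contra hlt
    push_neg at hlt
    set w : ℂ := -(ℓ (st.e, st.e)) / ℓ p with hw
    have hwabs : ‖w‖ < 1 := by
      rw [hw, norm_div, norm_neg]
      rw [div_lt_one (norm_pos_iff.mpr h0)]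
      exact hlt
    set q : B × B := cSmul w p with hq
    have hqn : rNorm q < 1 := by
      calc rNorm q ≤ ‖w‖ * cNorm p := rNorm_cSmul_le w p
      _ ≤ ‖w‖ * 1 := by
          exact mul_le_mul_of_nonneg_left hp (norm_nonneg w)
      _ < 1 := by rwa [mul_one]
    have hq1 : ‖q.1‖ < 1 := lt_of_le_of_lt (fst_le_rNorm q) hqn
    have hq2 : ‖q.2‖ < 1 := lt_of_le_of_lt (snd_le_rNorm q) hqn
    have hm1 := (e_add_mem st hq1).1
    have hm2 := (e_add_mem st hq2).1
    have hmem : ((st.e, st.e) : B × B) + q ∈ complexCone st.S := by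
      refine ⟨1, one_ne_zero, st.e + q.1, hm1, st.e + q.2, hm2, ?_⟩
      rw [cSmul_one']
      rfl
    have := hne _ hmem
    apply this
    rw [hadd, hq, hsmul, hw, div_mul_cancel₀ _ h0]
    ring
  refine Real.sSup_le ?_ (by positivity)
  rintro r ⟨p, hp, rfl⟩
  rw [← habs]
  exact key p hp

end ConeSetup
end

section
/- In the real/complex cone setup, if h, g ∈ 𝒞_ℂ satisfy 𝕞(h) = 𝕞(g) and |𝕞(g)| = 1, then ‖h − g‖ ≤ (√2/κ) δ_𝒞(h,g). -/
open Complex Set ENNReal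

noncomputable def Complex.abs : AbsoluteValue ℂ ℝ where
  toFun z := ‖z‖
  map_mul' := norm_mul
  nonneg' := norm_nonneg
  eq_zero' _ := norm_eq_zero
  add_le' := norm_add_le

theorem Complex.norm_eq_abs (z : ℂ) : ‖z‖ = Complex.abs z := rfl

theorem Complex.sq_abs (z : ℂ) : Complex.abs z ^ 2 = Complex.normSq z := Complex.sq_norm z

theorem Complex.abs_apply (z : ℂ) : Complex.abs z = Real.sqrt (Complex.normSq z) := by
  rw [← Complex.sq_abs, Real.sqrt_sq (AbsoluteValue.nonneg _ _)]

theorem Complex.abs_exp (z : ℂ) : Complex.abs (Complex.exp z) = Real.exp z.re := Complex.norm_exp z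

@[simp]
theorem Complex.abs_two : Complex.abs 2 = 2 := Complex.norm_two

theorem Complex.abs_ofReal (r : ℝ) : Complex.abs (r : ℂ) = |r| := Complex.norm_real r

theorem Complex.abs_re_le_abs (z : ℂ) : |z.re| ≤ Complex.abs z := Complex.abs_re_le_norm z

theorem Complex.abs_im_le_abs (z : ℂ) : |z.im| ≤ Complex.abs z := Complex.abs_im_le_norm z

theorem Complex.abs_deriv_le_div_of_mapsTo_ball {f : ℂ → ℂ} {c : ℂ} {R₁ R₂ : ℝ}
    (hd : DifferentiableOn ℂ f (Metric.ball c R₁))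
    (h_maps : Set.MapsTo f (Metric.ball c R₁) (Metric.ball (f c) R₂)) (h₀ : 0 < R₁) :
    Complex.abs (deriv f c) ≤ R₂ / R₁ :=
  Complex.norm_deriv_le_div_of_mapsTo_ball hd (h_maps.mono_right Metric.ball_subset_closedBall) h₀

namespace ConeSetup

variable {B : Type*} [NormedAddCommGroup B] [NormedSpace ℝ B]

section Aux

variable {B : Type*} [NormedAddCommGroup B] [NormedSpace ℝ B]

lemma cext_re (ℓ : B →L[ℝ] ℝ) (p : B × B) : (cext ℓ p).re = ℓ p.1 := by
  simp [cext]

lemma cext_im (ℓ : B →L[ℝ] ℝ) (p : B × B) : (cext ℓ p).im = ℓ p.2 := by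
  simp [cext]

lemma cext_sub (ℓ : B →L[ℝ] ℝ) (p q : B × B) :
    cext ℓ (p - q) = cext ℓ p - cext ℓ q := by
  simp only [cext, Prod.fst_sub, Prod.snd_sub, map_sub]
  push_cast; ring

lemma cext_add (ℓ : B →L[ℝ] ℝ) (p q : B × B) :
    cext ℓ (p + q) = cext ℓ p + cext ℓ q := by
  simp only [cext, Prod.fst_add, Prod.snd_add, map_add]
  push_cast; ring

lemma cext_smul (ℓ : B →L[ℝ] ℝ) (z : ℂ) (p : B × B) :
    cext ℓ (cSmul z p) = z * cext ℓ p := by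
  simp only [cext, cSmul, map_sub, map_add, map_smul]
  simp only [Complex.ext_iff, Complex.add_re, Complex.add_im, Complex.mul_re, Complex.mul_im,
    Complex.ofReal_re, Complex.ofReal_im, Complex.I_re, Complex.I_im, smul_eq_mul]
  constructor <;> ring

lemma cext_continuous (ℓ : B →L[ℝ] ℝ) : Continuous (cext ℓ) := by
  unfold cext
  exact (Complex.continuous_ofReal.comp (ℓ.continuous.comp continuous_fst)).add
    ((Complex.continuous_ofReal.comp (ℓ.continuous.comp continuous_snd)).mul continuous_const)

lemma cSmul_sub (z : ℂ) (p q : B × B) : cSmul z (p - q) = cSmul z p - cSmul z q := by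
  simp only [cSmul, Prod.fst_sub, Prod.snd_sub, smul_sub, Prod.mk_sub_mk, Prod.mk.injEq]
  constructor <;> abel

end Aux
section Aux2

variable {B : Type*} [NormedAddCommGroup B] [NormedSpace ℝ B]

lemma exists_norm_witness (st : Setup B) (v : B) :
    ∃ l : ℝ, 0 ≤ l ∧ ∀ ℓ ∈ st.S, 0 ≤ ℓ (l • st.e - v) ∧ 0 ≤ ℓ (l • st.e + v) := by
  obtain ⟨l₁, hl₁0, hl₁⟩ := st.arch v
  obtain ⟨l₂, hl₂0, hl₂⟩ := st.arch (-v)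
  refine ⟨(max l₁ l₂ : ℝ), le_trans hl₁0 (le_max_left _ _), fun ℓ hℓ => ?_⟩
  have he : 0 ≤ ℓ st.e := st.e_mem.2 ℓ hℓ
  constructor
  · have h1 : (max l₁ l₂) • st.e - v = (l₁ • st.e - v) + (max l₁ l₂ - l₁) • st.e := by
      rw [sub_smul]; abel
    rw [h1, map_add, map_smul]
    have := hl₁ ℓ hℓ
    have h2 : 0 ≤ (max l₁ l₂ - l₁) * ℓ st.e :=
      mul_nonneg (by simp [le_max_left]) he
    simpa [smul_eq_mul] using add_nonneg this h2
  · have h1 : (max l₁ l₂) • st.e + v = (l₂ • st.e - (-v)) + (max l₁ l₂ - l₂) • st.e := by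
      rw [sub_smul]; abel
    rw [h1, map_add, map_smul]
    have := hl₂ ℓ hℓ
    have h2 : 0 ≤ (max l₁ l₂ - l₂) * ℓ st.e :=
      mul_nonneg (by simp [le_max_right]) he
    simpa [smul_eq_mul] using add_nonneg this h2

lemma mem_T_iff (st : Setup B) (v : B) (l : ℝ) :
    (0 ≤ l ∧ ∀ ℓ ∈ st.S, 0 ≤ ℓ (l • st.e - v) ∧ 0 ≤ ℓ (l • st.e + v)) ↔
      (0 ≤ l ∧ ∀ ℓ ∈ st.S, |ℓ v| ≤ l * ℓ st.e) := by
  constructor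
  · rintro ⟨h0, h⟩
    refine ⟨h0, fun ℓ hℓ => ?_⟩
    obtain ⟨h1, h2⟩ := h ℓ hℓ
    rw [map_sub, map_smul] at h1
    rw [map_add, map_smul] at h2
    rw [abs_le]
    constructor <;> [skip; skip] <;> simp only [smul_eq_mul] at h1 h2 <;> linarith
  · rintro ⟨h0, h⟩
    refine ⟨h0, fun ℓ hℓ => ?_⟩
    have := abs_le.mp (h ℓ hℓ)
    rw [map_sub, map_smul, map_add, map_smul]
    simp only [smul_eq_mul]
    constructor <;> linarith [this.1, this.2]

lemma abs_apply_le (st : Setup B) {ℓ : B →L[ℝ] ℝ} (hℓ : ℓ ∈ st.S) (v : B) :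
    |ℓ v| ≤ ‖v‖ * ℓ st.e := by
  have hne : {l : ℝ | 0 ≤ l ∧ ∀ ℓ ∈ st.S, 0 ≤ ℓ (l • st.e - v) ∧ 0 ≤ ℓ (l • st.e + v)}.Nonempty :=
    by obtain ⟨l, hl⟩ := exists_norm_witness st v; exact ⟨l, hl⟩
  have he : 0 ≤ ℓ st.e := st.e_mem.2 ℓ hℓ
  rcases he.lt_or_eq with he' | he'
  · rw [st.norm_eq v]
    rw [← div_le_iff₀ he']
    apply le_csInf hne
    intro b hb
    have := ((mem_T_iff st v b).mp hb).2 ℓ hℓ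
    rw [div_le_iff₀ he']
    exact this
  · obtain ⟨l, hl⟩ := hne
    have := ((mem_T_iff st v l).mp hl).2 ℓ hℓ

    rw [← he'] at this ⊢
    simpa using this

lemma norm_le_of_forall (st : Setup B) {L : ℝ} {v : B} (hL : 0 ≤ L)
    (hb : ∀ ℓ ∈ st.S, |ℓ v| ≤ L * ℓ st.e) : ‖v‖ ≤ L := by
  rw [st.norm_eq v]
  apply csInf_le
  · exact ⟨0, fun b hb' => hb'.1⟩
  · exact (mem_T_iff st v L).mpr ⟨hL, hb⟩

lemma mm_pos (st : Setup B) {x : B} (hx : x ∈ realCone st.S) : 0 < st.mm x := by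
  have h1 := st.mm_lower x hx
  have h2 : 0 < ‖x‖ := norm_pos_iff.mpr hx.1
  nlinarith [st.κ_pos]

end Aux2
section Aux3

variable {B : Type*} [NormedAddCommGroup B] [NormedSpace ℝ B]

lemma cone_cSmul {S : Set (B →L[ℝ] ℝ)} {p : B × B} (hp : p ∈ complexCone S)
    {z : ℂ} (hz : z ≠ 0) : cSmul z p ∈ complexCone S := by
  obtain ⟨w, hw, x, hx, y, hy, rfl⟩ := hp
  refine ⟨z * w, mul_ne_zero hz hw, x, hx, y, hy, ?_⟩
  simp only [cSmul, Prod.mk.injEq, Complex.mul_re, Complex.mul_im]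
  constructor <;> [skip; skip] <;> rw [← sub_eq_zero] <;> module

lemma isCLin_comb (st : Setup B) (q : B →L[ℝ] ℝ) (s : ℂ) :
    IsCLinearFunctional (fun v : B × B => cext st.mm v + s * cext q v) := by
  refine ⟨fun p p' => ?_, fun z p => ?_, ?_⟩
  · simp only [cext_add]; ring
  · simp only [cext_smul]; ring
  · exact (cext_continuous st.mm).add (continuous_const.mul (cext_continuous q))

lemma cextmm_mem (st : Setup B) : cext st.mm ∈ dualComplexCone st.S := by
  constructor
  · have := isCLin_comb st 0 0
    simpa using this
  · rintro p ⟨z, hz, x, hx, y, hy, rfl⟩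
    rw [cext_smul]
    apply mul_ne_zero hz
    intro hc
    have : st.mm x = 0 := by
      have := congrArg Complex.re hc
      simpa [cext] using this
    exact (mm_pos st hx).ne' this

lemma Ls_mem (st : Setup B) {q : B →L[ℝ] ℝ} (hq0 : ∀ v ∈ realCone st.S, 0 ≤ q v)
    (hq1 : ∀ v : B, |q v| ≤ ‖v‖) {s : ℂ} (hs : -st.κ < s.re) :
    (fun v : B × B => cext st.mm v + s * cext q v) ∈ dualComplexCone st.S := by
  refine ⟨isCLin_comb st q s, ?_⟩
  rintro p ⟨z, hz, x, hx, y, hy, rfl⟩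
  have hsm : (fun v : B × B => cext st.mm v + s * cext q v) (cSmul z (x, y)) =
      z * (cext st.mm (x, y) + s * cext q (x, y)) := by
    simp only [cext_smul]; ring
  rw [hsm]
  apply mul_ne_zero hz
  set a := st.mm x with ha_def
  set b := st.mm y with hb_def
  set c := q x with hc_def
  set d := q y with hd_def
  have hxn : 0 < ‖x‖ := norm_pos_iff.mpr hx.1
  have hyn : 0 < ‖y‖ := norm_pos_iff.mpr hy.1
  have ha : 0 < a := mm_pos st hx
  have hb : 0 < b := mm_pos st hy
  have hc : 0 ≤ c := hq0 x hx
  have hd : 0 ≤ d := hq0 y hy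
  have hκc : st.κ * c ≤ a := by
    have h1 : c ≤ ‖x‖ := (le_abs_self _).trans (hq1 x)
    have h2 := st.mm_lower x hx
    nlinarith [st.κ_pos]
  have hκd : st.κ * d ≤ b := by
    have h1 : d ≤ ‖y‖ := (le_abs_self _).trans (hq1 y)
    have h2 := st.mm_lower y hy
    nlinarith [st.κ_pos]
  have hval : cext st.mm ((x, y) : B × B) + s * cext q (x, y) =
      ((a : ℂ) + b * Complex.I) + s * ((c : ℂ) + d * Complex.I) := by
    simp [cext, ha_def, hb_def, hc_def, hd_def]
  rw [hval]
  intro heq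
  have h1 : a + (s.re * c - s.im * d) = 0 := by
    have := congrArg Complex.re heq
    simpa [Complex.add_re, Complex.mul_re, Complex.mul_im] using this
  have h2 : b + (s.re * d + s.im * c) = 0 := by
    have := congrArg Complex.im heq
    simpa [Complex.add_im, Complex.mul_re, Complex.mul_im] using this
  have e1 : a * c + b * d = -(s.re) * (c ^ 2 + d ^ 2) := by
    linear_combination c * h1 + d * h2
  rcases eq_or_lt_of_le (add_nonneg (sq_nonneg c) (sq_nonneg d)) with hcd | hcd
  · have hc0 : c = 0 := by nlinarith [sq_nonneg c, sq_nonneg d]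
    have hd0 : d = 0 := by nlinarith [sq_nonneg c, sq_nonneg d]
    rw [hc0, hd0] at h1
    simp at h1
    linarith
  · have hk := st.κ_pos
    nlinarith [mul_le_mul_of_nonneg_right hκc hc, mul_le_mul_of_nonneg_right hκd hd]

end Aux3
section Aux4

lemma mobius_mem {κ : ℝ} (hκ : 0 < κ) {z : ℂ} (hz : Complex.abs z < 1) :
    -κ < (2 * (κ : ℂ) * z / (1 - z)).re := by
  have hns : Complex.normSq z < 1 := by
    rw [← Complex.sq_abs]; nlinarith [Complex.abs.nonneg z]
  have hz1 : (1 : ℂ) - z ≠ 0 := by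
    intro hc
    have : z = 1 := by linear_combination -hc
    rw [this] at hz; simp at hz
  have hpos : 0 < Complex.normSq (1 - z) := Complex.normSq_pos.mpr hz1
  rw [Complex.div_re]
  rw [← sub_pos]
  have key : (2 * (κ : ℂ) * z).re * (1 - z).re / Complex.normSq (1 - z) +
        (2 * (κ : ℂ) * z).im * (1 - z).im / Complex.normSq (1 - z) - (-κ) =
      κ * (1 - Complex.normSq z) / Complex.normSq (1 - z) := by
    field_simp
    simp [Complex.normSq_apply, Complex.mul_re, Complex.mul_im, Complex.sub_re, Complex.sub_im]
    ring
  rw [key]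
  have h1 : 0 < 1 - Complex.normSq z := by linarith
  positivity

lemma hasDerivAt_mobius (κ : ℝ) :
    HasDerivAt (fun z : ℂ => 2 * (κ : ℂ) * z / (1 - z)) (2 * κ) 0 := by
  have h1 : HasDerivAt (fun z : ℂ => 2 * (κ : ℂ) * z) (2 * κ) 0 := by
    simpa using (hasDerivAt_id (0 : ℂ)).const_mul (2 * (κ : ℂ))
  have h2 : HasDerivAt (fun z : ℂ => (1 : ℂ) - z) (-1) 0 := by
    simpa using (hasDerivAt_id (0 : ℂ)).const_sub 1
  have := h1.div h2 (by norm_num)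
  exact this.congr_deriv (by norm_num)

lemma tan_facts {w : ℂ} (hw : |w.re| < Real.pi / 4) :
    Complex.cos w ≠ 0 ∧ Complex.abs (Complex.tan w) < 1 := by
  set x := w.re
  set y := w.im
  have hw' : w = (x : ℂ) + (y : ℂ) * Complex.I := (Complex.re_add_im w).symm
  have hcos : Complex.cos w = ((Real.cos x * Real.cosh y : ℝ) : ℂ) +
      ((-(Real.sin x * Real.sinh y) : ℝ) : ℂ) * Complex.I := by
    rw [hw', Complex.cos_add_mul_I]
    push_cast [Complex.ofReal_cos, Complex.ofReal_sin, Complex.ofReal_cosh, Complex.ofReal_sinh]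
    ring
  have hsin : Complex.sin w = ((Real.sin x * Real.cosh y : ℝ) : ℂ) +
      ((Real.cos x * Real.sinh y : ℝ) : ℂ) * Complex.I := by
    rw [hw', Complex.sin_add_mul_I]
    push_cast [Complex.ofReal_cos, Complex.ofReal_sin, Complex.ofReal_cosh, Complex.ofReal_sinh]
    ring
  have hpi : 0 < Real.pi := Real.pi_pos
  have hx2 : 0 < Real.cos (2 * x) := by
    apply Real.cos_pos_of_mem_Ioo
    constructor <;> [skip; skip] <;> cases' abs_lt.mp hw with h1 h2 <;> linarith
  have hcs : Real.sin x ^ 2 < Real.cos x ^ 2 := by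
    nlinarith [Real.cos_two_mul x, Real.sin_sq_add_cos_sq x]
  have hcosh : 1 ≤ Real.cosh y ^ 2 := by nlinarith [Real.cosh_sq_sub_sinh_sq y, sq_nonneg (Real.sinh y)]
  have hnc : Complex.normSq (Complex.cos w) =
      Real.cos x ^ 2 * Real.cosh y ^ 2 + Real.sin x ^ 2 * Real.sinh y ^ 2 := by
    rw [hcos, Complex.normSq_add_mul_I]; ring
  have hns : Complex.normSq (Complex.sin w) =
      Real.sin x ^ 2 * Real.cosh y ^ 2 + Real.cos x ^ 2 * Real.sinh y ^ 2 := by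
    rw [hsin, Complex.normSq_add_mul_I]; ring
  have hlt : Complex.normSq (Complex.sin w) < Complex.normSq (Complex.cos w) := by
    rw [hnc, hns]
    nlinarith [Real.cosh_sq_sub_sinh_sq y]
  have hcpos : 0 < Complex.normSq (Complex.cos w) := by
    rw [hnc]
    have hc2 : 0 < Real.cos x ^ 2 := by nlinarith [sq_nonneg (Real.sin x)]
    nlinarith [sq_nonneg (Real.sin x * Real.sinh y)]
  have hcne : Complex.cos w ≠ 0 := by
    intro hc; rw [hc] at hcpos; simp at hcpos
  refine ⟨hcne, ?_⟩
  rw [Complex.tan_eq_sin_div_cos, map_div₀, div_lt_one (Complex.abs.pos hcne)]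
  have := Real.sqrt_lt_sqrt (Complex.normSq_nonneg _) hlt
  simpa [Complex.abs_apply] using this

lemma exists_rot {κ : ℝ} (hκ : 0 < κ) {A b : ℂ}
    (h : ∀ s : ℂ, -κ < s.re → A + s * b ≠ 0) :
    ∃ ω : ℂ, ∀ s : ℂ, -κ < s.re → 0 < (ω * (A + s * b)).re := by
  by_cases hb : b = 0
  · have hA : A ≠ 0 := by simpa [hb] using h 0 (by simpa using hκ)
    refine ⟨(starRingEnd ℂ) A, fun s _ => ?_⟩
    rw [hb, mul_zero, add_zero]
    have : (starRingEnd ℂ) A * A = (Complex.normSq A : ℂ) := by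
      rw [mul_comm, Complex.mul_conj]
    rw [this]
    simpa using Complex.normSq_pos.mpr hA
  · set s₀ : ℂ := -A / b with hs₀def
    have hs₀ : s₀.re ≤ -κ := by
      by_contra hcon
      push_neg at hcon
      apply h s₀ hcon
      rw [hs₀def, div_mul_cancel₀ _ hb]; ring
    have hA : A = -s₀ * b := by rw [hs₀def, neg_mul, div_mul_cancel₀ _ hb, neg_neg]
    refine ⟨(starRingEnd ℂ) b, fun s hs => ?_⟩
    have hval : (starRingEnd ℂ) b * (A + s * b) = (s - s₀) * (Complex.normSq b : ℂ) := by
      rw [hA, ← Complex.mul_conj]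
      ring
    rw [hval]
    have : ((s - s₀) * (Complex.normSq b : ℂ)).re = (s.re - s₀.re) * Complex.normSq b := by
      simp [Complex.mul_re, Complex.sub_re, Complex.sub_im]
    rw [this]
    have := Complex.normSq_pos.mpr hb
    have h2 : 0 < s.re - s₀.re := by linarith
    positivity

end Aux4
section Aux5

lemma core {κ δ : ℝ} (hκ : 0 < κ) (hδ : 0 ≤ δ) {A B₁ B₂ : ℂ} (hA : Complex.abs A = 1)
    (hN : ∀ s : ℂ, -κ < s.re → A + s * B₁ ≠ 0)
    (hD : ∀ s : ℂ, -κ < s.re → A + s * B₂ ≠ 0)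
    (hlb : ∀ s : ℂ, -κ < s.re →
      Real.exp (-δ) ≤ Complex.abs (A + s * B₁) / Complex.abs (A + s * B₂))
    (hub : ∀ s : ℂ, -κ < s.re →
      Complex.abs (A + s * B₁) / Complex.abs (A + s * B₂) ≤ Real.exp δ) :
    Complex.abs (B₁ - B₂) ≤ δ / κ := by
  obtain ⟨ω₁, hω₁⟩ := exists_rot hκ hN
  obtain ⟨ω₂, hω₂⟩ := exists_rot hκ hD
  have h0 : -κ < (0 : ℂ).re := by simpa using hκ
  have hAne : A ≠ 0 := by intro hc; rw [hc] at hA; simp at hA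
  have hω₁ne : ω₁ ≠ 0 := by
    intro hc; have := hω₁ 0 h0; rw [hc] at this; simp at this
  have hω₂ne : ω₂ ≠ 0 := by
    intro hc; have := hω₂ 0 h0; rw [hc] at this; simp at this
  set M : ℂ → ℂ := fun z => 2 * (κ : ℂ) * z / (1 - z) with hM
  set u : ℂ → ℂ := fun s =>
    (Complex.log (ω₁ * (A + s * B₁)) - Complex.log (ω₁ * A)) -
    (Complex.log (ω₂ * (A + s * B₂)) - Complex.log (ω₂ * A)) with hu
  have hder : ∀ s : ℂ, -κ < s.re → HasDerivAt u
      (ω₁ * B₁ / (ω₁ * (A + s * B₁)) - ω₂ * B₂ / (ω₂ * (A + s * B₂))) s := by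
    intro s hs
    have d1 : HasDerivAt (fun t : ℂ => ω₁ * (A + t * B₁)) (ω₁ * B₁) s := by
      have h' : HasDerivAt (fun t : ℂ => t * B₁) B₁ s := by
        simpa using (hasDerivAt_id s).mul_const B₁
      simpa using (h'.const_add A).const_mul ω₁
    have d2 : HasDerivAt (fun t : ℂ => ω₂ * (A + t * B₂)) (ω₂ * B₂) s := by
      have h' : HasDerivAt (fun t : ℂ => t * B₂) B₂ s := by
        simpa using (hasDerivAt_id s).mul_const B₂
      simpa using (h'.const_add A).const_mul ω₂
    have l1 := d1.clog (Complex.mem_slitPlane_iff.mpr (Or.inl (hω₁ s hs)))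
    have l2 := d2.clog (Complex.mem_slitPlane_iff.mpr (Or.inl (hω₂ s hs)))
    exact (l1.sub_const _).sub (l2.sub_const _)
  have hu0 : u 0 = 0 := by simp [hu]
  have hdu : HasDerivAt u ((B₁ - B₂) / A) 0 := by
    have hd := hder 0 h0
    convert hd using 1
    simp only [zero_mul, add_zero]
    rw [mul_div_mul_left _ _ hω₁ne, mul_div_mul_left _ _ hω₂ne]
    field_simp
  have hre : ∀ s : ℂ, -κ < s.re → |(u s).re| ≤ δ := by
    intro s hs
    have hN' := hN s hs
    have hD' := hD s hs
    have hb1 : Complex.abs (A + s * B₁) ≠ 0 := Complex.abs.ne_zero hN'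
    have hb2 : Complex.abs (A + s * B₂) ≠ 0 := Complex.abs.ne_zero hD'
    have ha1 : Complex.abs ω₁ ≠ 0 := Complex.abs.ne_zero hω₁ne
    have ha2 : Complex.abs ω₂ ≠ 0 := Complex.abs.ne_zero hω₂ne
    have hbA : Complex.abs A ≠ 0 := Complex.abs.ne_zero hAne
    have hre_eq : (u s).re =
        Real.log (Complex.abs (A + s * B₁) / Complex.abs (A + s * B₂)) := by
      simp only [hu, Complex.sub_re, Complex.log_re, Complex.norm_eq_abs]
      rw [map_mul, map_mul, map_mul, map_mul,
        Real.log_mul ha1 hb1, Real.log_mul ha1 hbA, Real.log_mul ha2 hb2,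
        Real.log_mul ha2 hbA, Real.log_div hb1 hb2]
      ring
    have hrpos : 0 < Complex.abs (A + s * B₁) / Complex.abs (A + s * B₂) := by
      have := Complex.abs.pos hN'
      have := Complex.abs.pos hD'
      positivity
    rw [hre_eq, abs_le]
    constructor
    · rw [← Real.log_exp (-δ)]
      exact (Real.log_le_log_iff (Real.exp_pos _) hrpos).mpr (hlb s hs)
    · rw [← Real.log_exp δ]
      exact (Real.log_le_log_iff hrpos (Real.exp_pos _)).mpr (hub s hs)
  have main : ∀ ε : ℝ, 0 < ε → Complex.abs ((B₁ - B₂) / A) ≤ (δ + ε) / κ := by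
    intro ε hε
    set δ'' : ℝ := δ + ε with hδ''
    have hδp : 0 < δ'' := by linarith
    have hπ := Real.pi_pos
    set c : ℝ := Real.pi / (4 * δ'') with hc
    have hcpos : 0 < c := by positivity
    set Φ : ℂ → ℂ := fun z => Complex.tan ((c : ℂ) * u (M z)) with hΦ
    have hmem : ∀ z ∈ Metric.ball (0 : ℂ) 1, -κ < (M z).re := by
      intro z hz
      apply mobius_mem hκ
      simpa [Complex.dist_eq, Complex.norm_eq_abs] using hz
    have hwre : ∀ z ∈ Metric.ball (0 : ℂ) 1, |((c : ℂ) * u (M z)).re| < Real.pi / 4 := by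
      intro z hz
      rw [Complex.re_ofReal_mul, abs_mul, abs_of_pos hcpos]
      have h1 := hre (M z) (hmem z hz)
      calc c * |(u (M z)).re| ≤ c * δ := by nlinarith
        _ < Real.pi / 4 := by
          rw [hc]
          rw [div_mul_eq_mul_div, div_lt_div_iff₀ (by positivity) (by norm_num)]
          nlinarith
    have hM0 : M 0 = 0 := by simp [hM]
    have hΦ0 : Φ 0 = 0 := by
      rw [hΦ]
      simp only [hM0, hu0, mul_zero, Complex.tan_zero]
    have hdiff : DifferentiableOn ℂ Φ (Metric.ball 0 1) := by
      intro z hz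
      apply DifferentiableAt.differentiableWithinAt
      have h1z : (1 : ℂ) - z ≠ 0 := by
        intro hcon
        have hz1 : z = 1 := by linear_combination -hcon
        rw [hz1] at hz
        simp [Complex.dist_eq] at hz
      have dM : DifferentiableAt ℂ M z := by
        apply DifferentiableAt.div
        · exact differentiableAt_id.const_mul _
        · exact (differentiableAt_const _).sub differentiableAt_id
        · exact h1z
      have dU : DifferentiableAt ℂ u (M z) := (hder _ (hmem z hz)).differentiableAt
      have dtan : DifferentiableAt ℂ Complex.tan ((c : ℂ) * u (M z)) :=
        Complex.differentiableAt_tan.mpr (tan_facts (hwre z hz)).1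
      exact dtan.comp z ((dU.comp z dM).const_mul _)
    have hmaps : Set.MapsTo Φ (Metric.ball 0 1) (Metric.ball (Φ 0) 1) := by
      intro z hz
      rw [hΦ0, Metric.mem_ball, Complex.dist_eq, sub_zero]
      exact (tan_facts (hwre z hz)).2
    have hSch := Complex.abs_deriv_le_div_of_mapsTo_ball hdiff hmaps one_pos
    have hcomp : HasDerivAt (fun z : ℂ => (c : ℂ) * u (M z))
        ((c : ℂ) * ((B₁ - B₂) / A) * (2 * κ)) 0 := by
      have hMder := hasDerivAt_mobius κ
      have hu' : HasDerivAt (fun w : ℂ => (c : ℂ) * u w) ((c : ℂ) * ((B₁ - B₂) / A)) (M 0) := by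
        rw [hM0]; exact hdu.const_mul _
      have := hu'.comp 0 hMder
      exact this
    have htan : HasDerivAt Complex.tan 1 ((c : ℂ) * u (M 0)) := by
      rw [hM0, hu0, mul_zero]
      have := Complex.hasDerivAt_tan (x := 0) (by simp)
      simpa using this
    have hd : HasDerivAt Φ (1 * ((c : ℂ) * ((B₁ - B₂) / A) * (2 * κ))) 0 := by
      have := htan.comp 0 hcomp
      exact this
    have hderiv0 : deriv Φ 0 = (c : ℂ) * ((B₁ - B₂) / A) * (2 * κ) := by
      have := hd.deriv
      simpa using this
    rw [hderiv0] at hSch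
    have habs : Complex.abs ((c : ℂ) * ((B₁ - B₂) / A) * (2 * κ)) =
        c * Complex.abs ((B₁ - B₂) / A) * (2 * κ) := by
      rw [map_mul, map_mul]
      simp [abs_of_pos hcpos, abs_of_pos hκ, Complex.abs_ofReal]
    rw [habs] at hSch
    -- hSch : c * X * (2κ) ≤ 1/1
    have hX : 0 ≤ Complex.abs ((B₁ - B₂) / A) := Complex.abs.nonneg _
    have hπ4 : c * Complex.abs ((B₁ - B₂) / A) * (2 * κ) ≤ 1 := by linarith [hSch]
    -- c = π/(4δ''), so X ≤ 4δ''/(2πκ) = 2δ''/(πκ) ≤ δ''/κ since π ≥ 2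
    rw [hc] at hπ4
    have key : Real.pi * Complex.abs ((B₁ - B₂) / A) * (2 * κ) ≤ 4 * δ'' := by
      rw [div_mul_eq_mul_div, div_mul_eq_mul_div, div_le_one (by positivity)] at hπ4
      linarith
    rw [le_div_iff₀ hκ]
    nlinarith [Real.pi_gt_three, mul_nonneg hX hκ.le]
  have habs2 : Complex.abs ((B₁ - B₂) / A) = Complex.abs (B₁ - B₂) := by
    rw [map_div₀, hA, div_one]
  have hfin : ∀ ε : ℝ, 0 < ε → Complex.abs (B₁ - B₂) ≤ δ / κ + ε := by
    intro ε hε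
    have := main (κ * ε) (by positivity)
    rw [habs2] at this
    calc Complex.abs (B₁ - B₂) ≤ (δ + κ * ε) / κ := this
      _ = δ / κ + ε := by field_simp
  exact le_of_forall_pos_le_add hfin

end Aux5
section Aux6

variable {B : Type*} [NormedAddCommGroup B] [NormedSpace ℝ B]

lemma key_abs_bound (st : Setup B) {h g : B × B} (hh : h ∈ complexCone st.S)
    (hg : g ∈ complexCone st.S) (hm : cext st.mm h = cext st.mm g)
    (hg1 : Complex.abs (cext st.mm g) = 1) {δ : ℝ} (hδ0 : 0 ≤ δ)
    (hpair : ∀ z ∈ gaugeSet st.S h g, ∀ w ∈ gaugeSet st.S h g,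
      Real.log (Complex.abs z / Complex.abs w) ≤ δ)
    {q : B →L[ℝ] ℝ} (hq0 : ∀ v ∈ realCone st.S, 0 ≤ q v) (hq1 : ∀ v : B, |q v| ≤ ‖v‖) :
    Complex.abs (cext q h - cext q g) ≤ δ / st.κ := by
  have hA1 : Complex.abs (cext st.mm h) = 1 := by rw [hm]; exact hg1
  have hAne : cext st.mm h ≠ 0 := by intro hc; rw [hc] at hA1; simp at hA1
  have hNmem : ∀ s : ℂ, -st.κ < s.re →
      (fun v : B × B => cext st.mm v + s * cext q v) ∈ dualComplexCone st.S :=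
    fun s hs => Ls_mem st hq0 hq1 hs
  have hN : ∀ s : ℂ, -st.κ < s.re → cext st.mm h + s * cext q h ≠ 0 :=
    fun s hs => (hNmem s hs).2 h hh
  have hD : ∀ s : ℂ, -st.κ < s.re → cext st.mm h + s * cext q g ≠ 0 := by
    intro s hs
    have := (hNmem s hs).2 g hg
    rw [hm]
    exact this
  have hone : (1 : ℂ) ∈ gaugeSet st.S h g := by
    refine ⟨cext st.mm, cextmm_mem st, ?_⟩
    rw [← hm]
    exact (div_self hAne).symm
  have hmemE : ∀ s : ℂ, -st.κ < s.re →
      (cext st.mm h + s * cext q h) / (cext st.mm h + s * cext q g) ∈ gaugeSet st.S h g := by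
    intro s hs
    refine ⟨_, hNmem s hs, ?_⟩
    show _ = (cext st.mm h + s * cext q h) / (cext st.mm g + s * cext q g)
    rw [hm]
  have hrpos : ∀ s : ℂ, -st.κ < s.re →
      0 < Complex.abs (cext st.mm h + s * cext q h) /
        Complex.abs (cext st.mm h + s * cext q g) := by
    intro s hs
    have h1 := Complex.abs.pos (hN s hs)
    have h2 := Complex.abs.pos (hD s hs)
    positivity
  have hub : ∀ s : ℂ, -st.κ < s.re →
      Complex.abs (cext st.mm h + s * cext q h) /
        Complex.abs (cext st.mm h + s * cext q g) ≤ Real.exp δ := by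
    intro s hs
    have h1 := hpair _ (hmemE s hs) 1 hone
    rw [map_one, div_one, map_div₀] at h1
    calc Complex.abs (cext st.mm h + s * cext q h) /
          Complex.abs (cext st.mm h + s * cext q g)
        = Real.exp (Real.log _) := (Real.exp_log (hrpos s hs)).symm
      _ ≤ Real.exp δ := Real.exp_le_exp.mpr h1
  have hlb : ∀ s : ℂ, -st.κ < s.re →
      Real.exp (-δ) ≤ Complex.abs (cext st.mm h + s * cext q h) /
        Complex.abs (cext st.mm h + s * cext q g) := by
    intro s hs
    have h1 := hpair 1 hone _ (hmemE s hs)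
    rw [map_one, map_div₀] at h1
    have h2 : Real.log (1 / (Complex.abs (cext st.mm h + s * cext q h) /
        Complex.abs (cext st.mm h + s * cext q g))) =
        -Real.log (Complex.abs (cext st.mm h + s * cext q h) /
        Complex.abs (cext st.mm h + s * cext q g)) := by
      rw [one_div, Real.log_inv]
    rw [h2] at h1
    have h3 : -δ ≤ Real.log (Complex.abs (cext st.mm h + s * cext q h) /
        Complex.abs (cext st.mm h + s * cext q g)) := by linarith
    calc Real.exp (-δ) ≤ Real.exp (Real.log _) := Real.exp_le_exp.mpr h3
      _ = _ := Real.exp_log (hrpos s hs)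
  exact core st.κ_pos hδ0 hA1 hN hD hlb hub

lemma component_bound (st : Setup B) {h g : B × B} (hh : h ∈ complexCone st.S)
    (hg : g ∈ complexCone st.S) (hm : cext st.mm h = cext st.mm g)
    (hg1 : Complex.abs (cext st.mm g) = 1) {δ : ℝ} (hδ0 : 0 ≤ δ)
    (hpair : ∀ z ∈ gaugeSet st.S h g, ∀ w ∈ gaugeSet st.S h g,
      Real.log (Complex.abs z / Complex.abs w) ≤ δ) :
    ‖(h - g).1‖ ≤ δ / st.κ ∧ ‖(h - g).2‖ ≤ δ / st.κ := by
  have hκ := st.κ_pos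
  have hL : 0 ≤ δ / st.κ := by positivity
  have main : ∀ ℓ ∈ st.S, |ℓ (h - g).1| ≤ δ / st.κ * ℓ st.e ∧
      |ℓ (h - g).2| ≤ δ / st.κ * ℓ st.e := by
    intro ℓ hℓ
    have he : 0 ≤ ℓ st.e := st.e_mem.2 ℓ hℓ
    rcases he.lt_or_eq with hpos | hzero
    · set q : B →L[ℝ] ℝ := (ℓ st.e)⁻¹ • ℓ with hq
      have hqv : ∀ v : B, q v = (ℓ st.e)⁻¹ * ℓ v := fun v => rfl
      have hinv : 0 < (ℓ st.e)⁻¹ := inv_pos.mpr hpos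
      have hq0 : ∀ v ∈ realCone st.S, 0 ≤ q v := by
        intro v hv
        rw [hqv]
        exact mul_nonneg hinv.le (hv.2 ℓ hℓ)
      have hq1 : ∀ v : B, |q v| ≤ ‖v‖ := by
        intro v
        rw [hqv, abs_mul, abs_of_pos hinv, inv_mul_le_iff₀ hpos]
        have := abs_apply_le st hℓ v
        linarith [this, mul_comm ‖v‖ (ℓ st.e)]
      have hkey := key_abs_bound st hh hg hm hg1 hδ0 hpair hq0 hq1
      rw [← cext_sub q h g] at hkey
      have h1 : |q (h - g).1| ≤ δ / st.κ := by
        have := Complex.abs_re_le_abs (cext q (h - g))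
        rw [cext_re] at this
        linarith
      have h2 : |q (h - g).2| ≤ δ / st.κ := by
        have := Complex.abs_im_le_abs (cext q (h - g))
        rw [cext_im] at this
        linarith
      constructor
      · have heq : |ℓ (h - g).1| = ℓ st.e * |q (h - g).1| := by
          rw [hqv, abs_mul, abs_of_pos hinv]
          field_simp
        rw [heq, mul_comm (δ / st.κ) (ℓ st.e)]
        exact mul_le_mul_of_nonneg_left h1 he
      · have heq : |ℓ (h - g).2| = ℓ st.e * |q (h - g).2| := by
          rw [hqv, abs_mul, abs_of_pos hinv]
          field_simp
        rw [heq, mul_comm (δ / st.κ) (ℓ st.e)]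
        exact mul_le_mul_of_nonneg_left h2 he
    · constructor
      · have := abs_apply_le st hℓ (h - g).1
        rw [← hzero] at this ⊢
        simpa using this
      · have := abs_apply_le st hℓ (h - g).2
        rw [← hzero] at this ⊢
        simpa using this
  exact ⟨norm_le_of_forall st hL fun ℓ hℓ => (main ℓ hℓ).1,
    norm_le_of_forall st hL fun ℓ hℓ => (main ℓ hℓ).2⟩

end Aux6
/-- **Lemma 5.12.** If `h, g ∈ 𝒞_ℂ` with `𝕞(h) = 𝕞(g)` and `|𝕞(g)| = 1`, then
`‖h − g‖ ≤ (√2/κ) δ_𝒞(h,g)`. -/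
theorem norm_diff_le_deltaGauge {B : Type*} [NormedAddCommGroup B] [NormedSpace ℝ B]
    [CompleteSpace B] (st : Setup B) :
    ∀ h ∈ complexCone st.S, ∀ g ∈ complexCone st.S,
      cext st.mm h = cext st.mm g → ‖cext st.mm g‖ = 1 →
        ENNReal.ofReal (cNorm (h - g)) ≤
          ENNReal.ofReal (Real.sqrt 2 / st.κ) * deltaGauge st.S h g := by
  intro h hh g hg hm hg1
  have hκ := st.κ_pos
  by_cases htop : deltaGauge st.S h g = ⊤
  · rw [htop, ENNReal.mul_top (ne_of_gt (ENNReal.ofReal_pos.mpr (by positivity)))]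
    exact le_top
  · set δ : ℝ := (deltaGauge st.S h g).toReal with hδdef
    have hδ0 : 0 ≤ δ := ENNReal.toReal_nonneg
    have hL : 0 ≤ δ / st.κ := by positivity
    have hg1' : Complex.abs (cext st.mm g) = 1 := by rw [← Complex.norm_eq_abs]; exact hg1
    have hpair : ∀ z ∈ gaugeSet st.S h g, ∀ w ∈ gaugeSet st.S h g,
        Real.log (Complex.abs z / Complex.abs w) ≤ δ := by
      intro z hz w hw
      have hle : ENNReal.ofReal (Real.log (‖z‖ / ‖w‖)) ≤ deltaGauge st.S h g := by
        calc ENNReal.ofReal (Real.log (‖z‖ / ‖w‖))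
            ≤ ⨆ w' ∈ gaugeSet st.S h g, ENNReal.ofReal (Real.log (‖z‖ / ‖w'‖)) :=
              le_iSup₂ (f := fun w' (_ : w' ∈ gaugeSet st.S h g) =>
                ENNReal.ofReal (Real.log (‖z‖ / ‖w'‖))) w hw
          _ ≤ deltaGauge st.S h g :=
              le_iSup₂ (f := fun z' (_ : z' ∈ gaugeSet st.S h g) =>
                ⨆ w' ∈ gaugeSet st.S h g, ENNReal.ofReal (Real.log (‖z'‖ / ‖w'‖))) z hz
      rw [Complex.norm_eq_abs, Complex.norm_eq_abs] at hle
      rcases le_or_gt (Real.log (Complex.abs z / Complex.abs w)) 0 with hneg | hposl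
      · linarith
      · rw [← ENNReal.ofReal_toReal htop] at hle
        exact (ENNReal.ofReal_le_ofReal_iff hδ0).mp hle
    have hbound : ∀ θ : ℝ,
        rNorm (cSmul (Complex.exp ((θ : ℂ) * Complex.I)) (h - g)) ≤
          Real.sqrt 2 * (δ / st.κ) := by
      intro θ
      set z : ℂ := Complex.exp ((θ : ℂ) * Complex.I) with hz
      have hzne : z ≠ 0 := Complex.exp_ne_zero _
      have hzabs : Complex.abs z = 1 := by
        rw [hz, Complex.abs_exp]
        simp
      have hh' := cone_cSmul hh hzne
      have hg' := cone_cSmul hg hzne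
      have hm' : cext st.mm (cSmul z h) = cext st.mm (cSmul z g) := by
        rw [cext_smul, cext_smul, hm]
      have hg1'' : Complex.abs (cext st.mm (cSmul z g)) = 1 := by
        rw [cext_smul, map_mul, hzabs, one_mul, hg1']
      have hEset : gaugeSet st.S (cSmul z h) (cSmul z g) = gaugeSet st.S h g := by
        ext w
        constructor
        · rintro ⟨ℓ, hℓ, rfl⟩
          exact ⟨ℓ, hℓ, by rw [hℓ.1.2.1 z h, hℓ.1.2.1 z g, mul_div_mul_left _ _ hzne]⟩
        · rintro ⟨ℓ, hℓ, rfl⟩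
          exact ⟨ℓ, hℓ, by rw [hℓ.1.2.1 z h, hℓ.1.2.1 z g, mul_div_mul_left _ _ hzne]⟩
      have hpair' : ∀ z' ∈ gaugeSet st.S (cSmul z h) (cSmul z g),
          ∀ w' ∈ gaugeSet st.S (cSmul z h) (cSmul z g),
            Real.log (Complex.abs z' / Complex.abs w') ≤ δ := by
        rw [hEset]; exact hpair
      have hcb := component_bound st hh' hg' hm' hg1'' hδ0 hpair'
      rw [← cSmul_sub] at hcb
      calc rNorm (cSmul z (h - g))
          = Real.sqrt (‖(cSmul z (h - g)).1‖ ^ 2 + ‖(cSmul z (h - g)).2‖ ^ 2) := rfl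
        _ ≤ Real.sqrt ((δ / st.κ) ^ 2 + (δ / st.κ) ^ 2) := by
            apply Real.sqrt_le_sqrt
            have h1 := hcb.1
            have h2 := hcb.2
            nlinarith [norm_nonneg (cSmul z (h - g)).1, norm_nonneg (cSmul z (h - g)).2]
        _ = Real.sqrt 2 * (δ / st.κ) := by
            rw [show (δ / st.κ) ^ 2 + (δ / st.κ) ^ 2 = 2 * (δ / st.κ) ^ 2 by ring,
              Real.sqrt_mul (by norm_num : (0:ℝ) ≤ 2), Real.sqrt_sq hL]
    have hcn : cNorm (h - g) ≤ Real.sqrt 2 * (δ / st.κ) := by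
      apply Real.sSup_le
      · rintro r ⟨θ, hθ, rfl⟩
        exact hbound θ
      · positivity
    calc ENNReal.ofReal (cNorm (h - g))
        ≤ ENNReal.ofReal (Real.sqrt 2 * (δ / st.κ)) := ENNReal.ofReal_le_ofReal hcn
      _ = ENNReal.ofReal (Real.sqrt 2 / st.κ * δ) := by ring_nf
      _ = ENNReal.ofReal (Real.sqrt 2 / st.κ) * ENNReal.ofReal δ :=
          ENNReal.ofReal_mul (by positivity)
      _ = ENNReal.ofReal (Real.sqrt 2 / st.κ) * deltaGauge st.S h g := by
          rw [hδdef, ENNReal.ofReal_toReal htop]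

end ConeSetup
end
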